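/- If M is a bounded subset of 𝒫_p(ℝ) for some p > 2 (i.e., sup_{μ∈M} ∫ |x|^p dμ(x) < ∞), then M is order bounded in 𝒫₂(ℝ) with respect to the stochastic order: there exist measures μ̲, μ̄ ∈ 𝒫₂(ℝ) with μ̲ ≤_st μ ≤_st μ̄ for all μ ∈ M. -/

import Mathlib

open MeasureTheory Filter Set ENNReal Topology

noncomputable section

/-- The stochastic order on measures on ℝ: `μ ≤_st ν` iff `∫ f dμ ≤ ∫ f dν`
for every bounded increasing function `f : ℝ → ℝ`. -/
def StOrder (μ ν : Measure ℝ) : Prop :=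
  ∀ f : ℝ → ℝ, Monotone f → (∃ C : ℝ, ∀ x, |f x| ≤ C) →
    ∫ x, f x ∂μ ≤ ∫ x, f x ∂ν

/-- `𝒫₂(ℝ)`: probability measures on ℝ with finite second moment. -/
def P2 : Set (Measure ℝ) :=
  {μ | IsProbabilityMeasure μ ∧ Integrable (fun x : ℝ => x ^ 2) μ}

lemma meas_Ici_le_aux (ν u : Measure ℝ) [IsFiniteMeasure u]
    (h : ∀ a : ℝ, ν (Ioi a) ≤ u (Ioi a)) (a : ℝ) : ν (Ici a) ≤ u (Ici a) := by
  have hI : (⋂ n : ℕ, Ioi (a - 1/(n+1))) = Ici a := by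
    ext x
    simp only [mem_iInter, mem_Ioi, mem_Ici]
    constructor
    · intro hx
      by_contra hxa
      push_neg at hxa
      obtain ⟨n, hn⟩ := exists_nat_one_div_lt (show 0 < a - x by linarith)
      have := hx n
      linarith
    · intro hx n
      have : (0:ℝ) < 1/(n+1) := by positivity
      linarith
  have htend : Tendsto (fun n : ℕ => u (Ioi (a - 1/(n+1)))) atTop (𝓝 (u (Ici a))) := by
    rw [← hI]
    apply tendsto_measure_iInter_atTop (fun n => (measurableSet_Ioi).nullMeasurableSet)
    · intro m n hmn x hx
      simp only [mem_Ioi] at *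
      have hc : ((m:ℝ)+1) ≤ (n:ℝ)+1 := by exact_mod_cast Nat.succ_le_succ hmn
      have : (1:ℝ)/(n+1) ≤ 1/(m+1) := by
        apply one_div_le_one_div_of_le (by positivity) hc
      linarith
    · exact ⟨0, measure_ne_top u _⟩
  refine ge_of_tendsto htend (Eventually.of_forall fun n => ?_)
  refine le_trans (measure_mono fun x hx => ?_) (h _)
  simp only [mem_Ici] at hx
  simp only [mem_Ioi]
  have : (0:ℝ) < 1/((n:ℝ)+1) := by positivity
  linarith

lemma upperSet_meas_le (ν u : Measure ℝ) [IsProbabilityMeasure ν] [IsProbabilityMeasure u]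
    (h : ∀ a : ℝ, ν (Ioi a) ≤ u (Ioi a)) (g : ℝ → ℝ) (hg : Monotone g) (t : ℝ) :
    ν {x | t < g x} ≤ u {x | t < g x} := by
  set S := {x : ℝ | t < g x} with hSdef
  rcases eq_empty_or_nonempty S with hS | hS
  · simp [hS]
  rcases eq_or_ne S univ with hSu | hSu
  · rw [hSu]; simp
  have hbdd : BddBelow S := by
    obtain ⟨b, hb⟩ : ∃ b, b ∉ S := by
      by_contra hc; push_neg at hc; exact hSu (eq_univ_of_forall hc)
    refine ⟨b, fun x hx => ?_⟩
    by_contra hxb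
    push_neg at hxb
    exact hb (lt_of_lt_of_le hx (hg hxb.le))
  set a := sInf S with ha
  have hIoi : Ioi a ⊆ S := fun x hx => by
    obtain ⟨s, hsS, hsx⟩ := Real.lt_sInf_add_pos hS (sub_pos.mpr hx)
    exact lt_of_lt_of_le hsS (hg (by linarith : s ≤ x))
  have hIci : S ⊆ Ici a := fun x hx => csInf_le hbdd hx
  by_cases haS : a ∈ S
  · have : S = Ici a := Subset.antisymm hIci (fun x hx => by
      rcases eq_or_lt_of_le (mem_Ici.mp hx) with rfl | hlt
      · exact haS
      · exact hIoi hlt)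
    rw [this]; exact meas_Ici_le_aux ν u h a
  · have : S = Ioi a := Subset.antisymm (fun x hx => lt_of_le_of_ne (hIci hx) (fun (he : a = x) => haS (by rw [he]; exact hx))) hIoi
    rw [this]; exact h a


lemma stOrder_of_tail (ν u : Measure ℝ) [IsProbabilityMeasure ν] [IsProbabilityMeasure u]
    (h : ∀ a : ℝ, ν (Ioi a) ≤ u (Ioi a)) : StOrder ν u := by
  rintro f hf ⟨C, hC⟩
  set g := fun x => f x + C with hgdef
  have hgmono : Monotone g := fun x y hxy => by simp only [hgdef]; linarith [hf hxy]
  have hg0 : ∀ x, 0 ≤ g x := fun x => by have := abs_le.mp (hC x); simp only [hgdef]; linarith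
  have hgle : ∀ x, g x ≤ 2 * C := fun x => by have := abs_le.mp (hC x); simp only [hgdef]; linarith
  have hgm : Measurable g := hgmono.measurable
  have hfm : Measurable f := hf.measurable
  have hfint : ∀ (m : Measure ℝ) [IsProbabilityMeasure m], Integrable f m := by
    intro m _
    exact (integrable_const C).mono' hfm.aestronglyMeasurable
      (Eventually.of_forall fun x => by simpa using hC x)
  have key : ∫⁻ x, ENNReal.ofReal (g x) ∂ν ≤ ∫⁻ x, ENNReal.ofReal (g x) ∂u := by
    rw [lintegral_eq_lintegral_meas_lt ν (Eventually.of_forall hg0) hgm.aemeasurable,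
        lintegral_eq_lintegral_meas_lt u (Eventually.of_forall hg0) hgm.aemeasurable]
    exact lintegral_mono fun t => upperSet_meas_le ν u h g hgmono t
  have hfin : ∫⁻ x, ENNReal.ofReal (g x) ∂u ≠ ⊤ := by
    refine ne_of_lt (lt_of_le_of_lt (lintegral_mono fun x =>
      ENNReal.ofReal_le_ofReal (hgle x)) ?_)
    simp [lintegral_const]
    exact ENNReal.mul_lt_top (by norm_num) ENNReal.ofReal_lt_top
  have h1 : ∫ x, g x ∂ν = (∫⁻ x, ENNReal.ofReal (g x) ∂ν).toReal :=
    integral_eq_lintegral_of_nonneg_ae (Eventually.of_forall hg0) hgm.aestronglyMeasurable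
  have h2 : ∫ x, g x ∂u = (∫⁻ x, ENNReal.ofReal (g x) ∂u).toReal :=
    integral_eq_lintegral_of_nonneg_ae (Eventually.of_forall hg0) hgm.aestronglyMeasurable
  have hgint : ∫ x, g x ∂ν ≤ ∫ x, g x ∂u := by
    rw [h1, h2]; exact ENNReal.toReal_mono hfin key
  have e1 : ∫ x, g x ∂ν = ∫ x, f x ∂ν + C := by
    rw [hgdef]; rw [integral_add (hfint ν) (integrable_const C)]; simp
  have e2 : ∫ x, g x ∂u = ∫ x, f x ∂u + C := by
    rw [hgdef]; rw [integral_add (hfint u) (integrable_const C)]; simp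
  linarith [e1 ▸ e2 ▸ hgint]


lemma exists_upper (p c : ℝ) (hp : 2 < p) (hc : 1 ≤ c) :
    ∃ u : Measure ℝ, IsProbabilityMeasure u ∧ Integrable (fun x : ℝ => x ^ 2) u ∧
      ∀ b : ℝ, c ^ (1/p) ≤ b → u (Ioi b) = ENNReal.ofReal (c * b ^ (-p)) := by
  have hp0 : (0:ℝ) < p := by linarith
  have hc0 : (0:ℝ) < c := by linarith
  set x₀ := c ^ (1/p) with hx₀def
  have hx₀ : 0 < x₀ := Real.rpow_pos_of_pos hc0 _
  set w : ℝ → ℝ := (Ioi x₀).indicator (fun x => p * c * x ^ (-(p+1))) with hwdef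
  have hwnn : ∀ x, 0 ≤ w x := by
    intro x
    rw [hwdef]
    by_cases hx : x ∈ Ioi x₀
    · rw [indicator_of_mem hx]
      have : (0:ℝ) < x := lt_trans hx₀ hx
      positivity
    · rw [indicator_of_notMem hx]
  have hwm : Measurable w :=
    (measurable_const.mul (measurable_id.pow measurable_const)).indicator measurableSet_Ioi
  have hofm : Measurable (fun x => ENNReal.ofReal (w x)) := hwm.ennreal_ofReal
  set u : Measure ℝ := volume.withDensity (fun x => ENNReal.ofReal (w x)) with hudef
  -- key tail computation
  have key : ∀ b : ℝ, x₀ ≤ b → (∫⁻ x in Ioi b, ENNReal.ofReal (w x)) = ENNReal.ofReal (c * b ^ (-p)) := by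
    intro b hb
    have hb0 : (0:ℝ) < b := lt_of_lt_of_le hx₀ hb
    have hcong : ∀ x ∈ Ioi b, ENNReal.ofReal (w x) = ENNReal.ofReal (p * c * x ^ (-(p+1))) := by
      intro x hx
      rw [hwdef, indicator_of_mem (mem_Ioi.mpr (lt_of_le_of_lt hb hx))]
    rw [setLIntegral_congr_fun measurableSet_Ioi hcong]
    have hexp : -(p+1) < -1 := by linarith
    have hint : IntegrableOn (fun x : ℝ => p * c * x ^ (-(p+1))) (Ioi b) :=
      (integrableOn_Ioi_rpow_of_lt hexp hb0).const_mul (p * c)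
    rw [← ofReal_integral_eq_lintegral_ofReal hint
      ((ae_restrict_iff' measurableSet_Ioi).mpr (Eventually.of_forall fun x => ?_))]
    · congr 1
      rw [integral_const_mul, integral_Ioi_rpow_of_lt hexp hb0]
      have : -(p+1) + 1 = -p := by ring
      rw [this]
      field_simp
    · exact fun hx => le_of_lt (by have : (0:ℝ) < x := lt_trans hb0 hx; positivity)
  -- indicator structure of the density
  have hind : (fun x => ENNReal.ofReal (w x)) =
      (Ioi x₀).indicator (fun x => ENNReal.ofReal (p * c * x ^ (-(p+1)))) := by
    funext x
    rw [hwdef]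
    by_cases hx : x ∈ Ioi x₀
    · rw [indicator_of_mem hx, indicator_of_mem hx]
    · rw [indicator_of_notMem hx, indicator_of_notMem hx, ENNReal.ofReal_zero]
  have huniv : ∀ s : Set ℝ, MeasurableSet s → Ioi x₀ ⊆ s →
      u s = ENNReal.ofReal (c * x₀ ^ (-p)) := by
    intro s hs hsub
    rw [hudef, withDensity_apply _ hs]
    have : ∫⁻ x in s, ENNReal.ofReal (w x) = ∫⁻ x in Ioi x₀, ENNReal.ofReal (w x) := by
      rw [hind, lintegral_indicator measurableSet_Ioi, lintegral_indicator measurableSet_Ioi,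
        Measure.restrict_restrict measurableSet_Ioi, Measure.restrict_restrict measurableSet_Ioi,
        inter_eq_left.mpr hsub, inter_self]
    rw [this]
    exact key x₀ le_rfl
  have hone : c * x₀ ^ (-p) = 1 := by
    rw [hx₀def, ← Real.rpow_mul hc0.le]
    have hpe : 1/p * -p = -1 := by field_simp
    rw [hpe, Real.rpow_neg_one]
    field_simp
  refine ⟨u, ⟨?_⟩, ?_, ?_⟩
  · rw [huniv univ MeasurableSet.univ (subset_univ _), hone, ENNReal.ofReal_one]
  · rw [hudef, integrable_withDensity_iff hofm (Eventually.of_forall fun x => ENNReal.ofReal_lt_top)]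
    have heq : (fun x : ℝ => x ^ 2 * (ENNReal.ofReal (w x)).toReal) =
        (Ioi x₀).indicator (fun x => (p * c) * x ^ (1 - p)) := by
      funext x
      rw [ENNReal.toReal_ofReal (hwnn x), hwdef]
      by_cases hx : x ∈ Ioi x₀
      · rw [indicator_of_mem hx, indicator_of_mem hx]
        have hxpos : (0:ℝ) < x := lt_trans hx₀ hx
        have h1 : x ^ (1-p) = x ^ ((2:ℕ):ℝ) * x ^ (-(p+1)) := by
          rw [← Real.rpow_add hxpos]; congr 1; push_cast; ring
        rw [h1, Real.rpow_natCast]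
        ring
      · rw [indicator_of_notMem hx, indicator_of_notMem hx, mul_zero]
    rw [heq]
    have hio : IntegrableOn (fun x : ℝ => (p * c) * x ^ (1 - p)) (Ioi x₀) :=
      (integrableOn_Ioi_rpow_of_lt (by linarith : 1 - p < -1) hx₀).const_mul (p * c)
    exact hio.integrable_indicator measurableSet_Ioi
  · intro b hb
    rw [hudef, withDensity_apply _ measurableSet_Ioi]
    exact key b hb

/-- If `M` is a bounded subset of `𝒫_p(ℝ)` for some `p > 2`
(uniformly bounded `p`-th moments), then `M` is order bounded in `𝒫₂(ℝ)`
with respect to the stochastic order. -/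
theorem pth_moment_bounded_implies_order_bounded (p : ℝ) (hp : 2 < p)
    (M : Set (Measure ℝ)) (hprob : ∀ μ ∈ M, IsProbabilityMeasure μ)
    (hbd : ∃ C : ℝ≥0∞, C < ⊤ ∧ ∀ μ ∈ M, (∫⁻ x, ENNReal.ofReal (|x| ^ p) ∂μ) ≤ C) :
    (∃ l ∈ P2, ∀ μ ∈ M, StOrder l μ) ∧ (∃ u ∈ P2, ∀ μ ∈ M, StOrder μ u) := by
  obtain ⟨C, hCt, hCle⟩ := hbd
  set c := max C.toReal 1 with hcdef
  have hc1 : (1:ℝ) ≤ c := le_max_right _ _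
  have hc0 : (0:ℝ) < c := lt_of_lt_of_le one_pos hc1
  have hCc : C ≤ ENNReal.ofReal c := by
    rw [← ENNReal.ofReal_toReal hCt.ne]
    exact ENNReal.ofReal_le_ofReal (le_max_left _ _)
  obtain ⟨u, hup, hu2, hutail⟩ := exists_upper p c hp hc1
  set x₀ := c ^ (1/p) with hx₀def
  have hx₀ : 0 < x₀ := Real.rpow_pos_of_pos hc0 _
  have hone : c * x₀ ^ (-p) = 1 := by
    rw [hx₀def, ← Real.rpow_mul hc0.le]
    have hpe : 1/p * -p = -1 := by field_simp
    rw [hpe, Real.rpow_neg_one]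
    field_simp
  have markov : ∀ μ ∈ M, ∀ a : ℝ, x₀ ≤ a →
      μ {x : ℝ | ENNReal.ofReal (a ^ p) ≤ ENNReal.ofReal (|x| ^ p)} ≤
        ENNReal.ofReal (c * a ^ (-p)) := by
    intro μ hμ a ha
    have ha0 : (0:ℝ) < a := lt_of_lt_of_le hx₀ ha
    have hap : (0:ℝ) < a ^ p := Real.rpow_pos_of_pos ha0 _
    have hmeas : AEMeasurable (fun x : ℝ => ENNReal.ofReal (|x| ^ p)) μ :=
      ((measurable_abs.pow measurable_const).ennreal_ofReal).aemeasurable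
    refine le_trans (meas_ge_le_lintegral_div hmeas
      (by simp [ENNReal.ofReal_eq_zero]; linarith) ENNReal.ofReal_ne_top) ?_
    refine le_trans (ENNReal.div_le_div_right (le_trans (hCle μ hμ) hCc) _) ?_
    rw [← ENNReal.ofReal_div_of_pos hap]
    apply le_of_eq
    congr 1
    rw [Real.rpow_neg ha0.le]
    ring
  have tail_u : ∀ μ ∈ M, ∀ a : ℝ, μ (Ioi a) ≤ u (Ioi a) := by
    intro μ hμ a
    haveI := hprob μ hμ
    by_cases ha : x₀ ≤ a
    · rw [hutail a ha]
      refine le_trans (measure_mono fun x hx => ?_) (markov μ hμ a ha)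
      have hax : a ≤ |x| := le_trans (le_of_lt hx) (le_abs_self x)
      exact ENNReal.ofReal_le_ofReal
        (Real.rpow_le_rpow (lt_of_lt_of_le hx₀ ha).le hax (by linarith))
    · push_neg at ha
      calc μ (Ioi a) ≤ 1 := prob_le_one
      _ = u (Ioi x₀) := by rw [hutail x₀ le_rfl, hone, ENNReal.ofReal_one]
      _ ≤ u (Ioi a) := measure_mono (Ioi_subset_Ioi ha.le)
  have tail_l : ∀ μ ∈ M, ∀ a : ℝ, (μ.map Neg.neg) (Ioi a) ≤ u (Ioi a) := by
    intro μ hμ a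
    haveI := hprob μ hμ
    rw [Measure.map_apply measurable_neg measurableSet_Ioi]
    have hpre : (Neg.neg ⁻¹' Ioi a : Set ℝ) = Iio (-a) := by
      ext x
      simp only [mem_preimage, mem_Ioi, mem_Iio]
      constructor <;> intro h <;> linarith
    rw [hpre]
    by_cases ha : x₀ ≤ a
    · rw [hutail a ha]
      refine le_trans (measure_mono fun x hx => ?_) (markov μ hμ a ha)
      have hax : a ≤ |x| := by
        have : a ≤ -x := by simp only [mem_Iio] at hx; linarith
        exact le_trans this (neg_le_abs x)
      exact ENNReal.ofReal_le_ofReal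
        (Real.rpow_le_rpow (lt_of_lt_of_le hx₀ ha).le hax (by linarith))
    · push_neg at ha
      calc μ (Iio (-a)) ≤ 1 := prob_le_one
      _ = u (Ioi x₀) := by rw [hutail x₀ le_rfl, hone, ENNReal.ofReal_one]
      _ ≤ u (Ioi a) := measure_mono (Ioi_subset_Ioi ha.le)
  haveI : IsProbabilityMeasure u := hup
  set l : Measure ℝ := u.map Neg.neg with hldef
  haveI hlp : IsProbabilityMeasure l := Measure.isProbabilityMeasure_map measurable_neg.aemeasurable
  have hl2 : Integrable (fun x : ℝ => x ^ 2) l := by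
    rw [hldef, integrable_map_measure
      (continuous_pow 2).measurable.aestronglyMeasurable measurable_neg.aemeasurable]
    have hcomp : ((fun a : ℝ => a ^ 2) ∘ Neg.neg) = fun a : ℝ => a ^ 2 := by
      funext a; simp [Function.comp, neg_sq]
    rw [hcomp]; exact hu2
  constructor
  · refine ⟨l, ⟨hlp, hl2⟩, fun μ hμ => ?_⟩
    haveI := hprob μ hμ
    haveI : IsProbabilityMeasure (μ.map Neg.neg) :=
      Measure.isProbabilityMeasure_map measurable_neg.aemeasurable
    have hst := stOrder_of_tail (μ.map Neg.neg) u (tail_l μ hμ)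
    rintro f hf ⟨Cf, hCf⟩
    have hfm : Measurable f := hf.measurable
    have hg : Monotone (fun x : ℝ => -(f (-x))) :=
      fun x y hxy => neg_le_neg (hf (neg_le_neg hxy))
    have h2 := hst _ hg ⟨Cf, fun x => by rw [abs_neg]; exact hCf _⟩
    have hgm : Measurable fun x : ℝ => -(f (-x)) := (hfm.comp measurable_neg).neg
    rw [integral_map (f := fun x : ℝ => -(f (-x))) measurable_neg.aemeasurable
      hgm.aestronglyMeasurable] at h2
    simp only [neg_neg] at h2
    rw [integral_neg, integral_neg] at h2
    rw [hldef, integral_map measurable_neg.aemeasurable hfm.aestronglyMeasurable]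
    linarith
  · refine ⟨u, ⟨hup, hu2⟩, fun μ hμ => ?_⟩
    haveI := hprob μ hμ
    exact stOrder_of_tail μ u (tail_u μ hμ)
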